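/- Let z₁,…,z_M : ℝ^{1+n} → ℂ be C² maps satisfying □₂ z_i = 0 and ∂^μ z_i ∂_μ z_j = 0 for all i,j, and let f : ℂ^M → ℂ be a C² function of (z₁,…,z_M, z̄₁,…,z̄_M). Then the currents J_μ = Σ_{j=1}^M ( (∂f/∂z_j) ∂_μ z_j − (∂f/∂z̄_j) ∂_μ z̄_j ) satisfy ∂^μ J_μ = 0. -/

import Mathlib

/-- Partial derivative in the μ-th coordinate direction. -/
noncomputable def pd {n : ℕ} (μ : Fin (n+1)) (u : (Fin (n+1) → ℝ) → ℂ) :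
    (Fin (n+1) → ℝ) → ℂ :=
  fun x => fderiv ℝ u x (Pi.single μ 1)

/-- The d'Alembertian □₂ = ∂₀² − Σⱼ ∂ⱼ² on ℝ^{1+n}. -/
noncomputable def box2 {n : ℕ} (u : (Fin (n+1) → ℝ) → ℂ) :
    (Fin (n+1) → ℝ) → ℂ :=
  fun x => pd 0 (pd 0 u) x - ∑ j : Fin n, pd j.succ (pd j.succ u) x

/-- Wirtinger derivative ∂/∂z_k of a function F : ℂ^M → ℂ (viewed as a real-smooth map). -/
noncomputable def wD {M : ℕ} (k : Fin M) (F : (Fin M → ℂ) → ℂ) : (Fin M → ℂ) → ℂ :=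
  fun Z => (fderiv ℝ F Z (Pi.single k 1) - Complex.I * fderiv ℝ F Z (Pi.single k Complex.I)) / 2

/-- Wirtinger derivative ∂/∂z̄_k of a function F : ℂ^M → ℂ. -/
noncomputable def wDbar {M : ℕ} (k : Fin M) (F : (Fin M → ℂ) → ℂ) : (Fin M → ℂ) → ℂ :=
  fun Z => (fderiv ℝ F Z (Pi.single k 1) + Complex.I * fderiv ℝ F Z (Pi.single k Complex.I)) / 2

open Complex

section DD
variable {E : Type*} [NormedAddCommGroup E] [NormedSpace ℝ E]

/-- directional derivative -/
noncomputable def dd (v : E) (F : E → ℂ) : E → ℂ := fun y => fderiv ℝ F y v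

lemma dd_differentiable {F : E → ℂ} (hF : ContDiff ℝ 2 F) (v : E) :
    Differentiable ℝ (dd v F) := by
  have h1 : Differentiable ℝ (fderiv ℝ F) :=
    (hF.fderiv_right (m := 1) (by norm_num)).differentiable one_ne_zero
  exact h1.clm_apply (differentiable_const v)

lemma fderiv_dd {F : E → ℂ} (hF : ContDiff ℝ 2 F) (v u : E) (x : E) :
    fderiv ℝ (dd v F) x u = fderiv ℝ (fderiv ℝ F) x u v := by
  have h1 : DifferentiableAt ℝ (fderiv ℝ F) x :=
    ((hF.fderiv_right (m := 1) (by norm_num)).differentiable one_ne_zero) x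
  have h2 := fderiv_clm_apply (c := fderiv ℝ F) (u := fun _ => v) h1 (differentiableAt_const v)
  have h3 : dd v F = fun y => (fderiv ℝ F y) ((fun _ => v) y) := rfl
  rw [h3, h2]
  simp

lemma dd_comm {F : E → ℂ} (hF : ContDiff ℝ 2 F) (u v : E) (x : E) :
    dd u (dd v F) x = dd v (dd u F) x := by
  have hs : IsSymmSndFDerivAt ℝ F x := hF.contDiffAt.isSymmSndFDerivAt (by norm_num)
  show fderiv ℝ (dd v F) x u = fderiv ℝ (dd u F) x v
  rw [fderiv_dd hF, fderiv_dd hF]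
  exact hs.eq u v

lemma dd_sub {g h : E → ℂ} {x : E} (hg : DifferentiableAt ℝ g x)
    (hh : DifferentiableAt ℝ h x) (v : E) :
    dd v (fun y => g y - h y) x = dd v g x - dd v h x := by
  simp only [dd]; rw [fderiv_fun_sub hg hh]; simp

lemma dd_add {g h : E → ℂ} {x : E} (hg : DifferentiableAt ℝ g x)
    (hh : DifferentiableAt ℝ h x) (v : E) :
    dd v (fun y => g y + h y) x = dd v g x + dd v h x := by
  simp only [dd]; rw [fderiv_fun_add hg hh]; simp

lemma dd_const_mul {g : E → ℂ} {x : E} (hg : DifferentiableAt ℝ g x) (c : ℂ) (v : E) :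
    dd v (fun y => c * g y) x = c * dd v g x := by
  simp only [dd]; rw [fderiv_const_mul hg c]; simp

lemma dd_div_two {g : E → ℂ} {x : E} (hg : DifferentiableAt ℝ g x) (v : E) :
    dd v (fun y => g y / 2) x = dd v g x / 2 := by
  have h : (fun y => g y / 2) = fun y => (2⁻¹ : ℂ) * g y := by
    funext y; ring
  rw [h, dd_const_mul hg]; ring

lemma dd_mul {g h : E → ℂ} {x : E} (hg : DifferentiableAt ℝ g x)
    (hh : DifferentiableAt ℝ h x) (v : E) :
    dd v (fun y => g y * h y) x = dd v g x * h x + g x * dd v h x := by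
  simp only [dd]; rw [fderiv_fun_mul hg hh]; simp; ring

lemma dd_conj {g : E → ℂ} {x : E} (hg : DifferentiableAt ℝ g x) (v : E) :
    dd v (fun y => starRingEnd ℂ (g y)) x = starRingEnd ℂ (dd v g x) := by
  simp only [dd]
  have h : (fun y => starRingEnd ℂ (g y)) = ⇑Complex.conjCLE ∘ g := rfl
  rw [h, Complex.conjCLE.comp_fderiv]
  simp

lemma dd_sum {ι : Type*} {s : Finset ι} {g : ι → E → ℂ} {x : E}
    (hg : ∀ i ∈ s, DifferentiableAt ℝ (g i) x) (v : E) :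
    dd v (fun y => ∑ i ∈ s, g i y) x = ∑ i ∈ s, dd v (g i) x := by
  simp only [dd]; rw [fderiv_fun_sum hg]; simp

lemma differentiable_conj_comp {g : E → ℂ} (hg : Differentiable ℝ g) :
    Differentiable ℝ (fun y => starRingEnd ℂ (g y)) :=
  Complex.conjCLE.differentiable.comp hg

end DD

section WirtingerAux
variable {M : ℕ}

lemma wD_eq (k : Fin M) (F : (Fin M → ℂ) → ℂ) :
    wD k F = fun Z => (dd (Pi.single k 1) F Z - Complex.I * dd (Pi.single k Complex.I) F Z) / 2 := rfl

lemma wDbar_eq (k : Fin M) (F : (Fin M → ℂ) → ℂ) :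
    wDbar k F = fun Z => (dd (Pi.single k 1) F Z + Complex.I * dd (Pi.single k Complex.I) F Z) / 2 := rfl

lemma wD_differentiable {F : (Fin M → ℂ) → ℂ} (hF : ContDiff ℝ 2 F) (k : Fin M) :
    Differentiable ℝ (wD k F) := by
  rw [wD_eq]
  have h : Differentiable ℝ (fun Z => dd (Pi.single k 1) F Z - I * dd (Pi.single k I) F Z) :=
    (dd_differentiable hF _).sub ((dd_differentiable hF _).const_mul I)
  have h2 : (fun Z : Fin M → ℂ => (dd (Pi.single k 1) F Z - I * dd (Pi.single k I) F Z) / 2)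
      = fun Z => (2⁻¹ : ℂ) * (dd (Pi.single k 1) F Z - I * dd (Pi.single k I) F Z) := by
    funext Z; ring
  rw [h2]; exact h.const_mul _

lemma wDbar_differentiable {F : (Fin M → ℂ) → ℂ} (hF : ContDiff ℝ 2 F) (k : Fin M) :
    Differentiable ℝ (wDbar k F) := by
  rw [wDbar_eq]
  have h : Differentiable ℝ (fun Z => dd (Pi.single k 1) F Z + I * dd (Pi.single k I) F Z) :=
    (dd_differentiable hF _).add ((dd_differentiable hF _).const_mul I)
  have h2 : (fun Z : Fin M → ℂ => (dd (Pi.single k 1) F Z + I * dd (Pi.single k I) F Z) / 2)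
      = fun Z => (2⁻¹ : ℂ) * (dd (Pi.single k 1) F Z + I * dd (Pi.single k I) F Z) := by
    funext Z; ring
  rw [h2]; exact h.const_mul _

lemma dd_wD {F : (Fin M → ℂ) → ℂ} (hF : ContDiff ℝ 2 F) (k : Fin M) (v : Fin M → ℂ) (x : Fin M → ℂ) :
    dd v (wD k F) x = (dd v (dd (Pi.single k 1) F) x - Complex.I * dd v (dd (Pi.single k Complex.I) F) x) / 2 := by
  rw [wD_eq]
  rw [dd_div_two (g := fun Z => dd (Pi.single k 1) F Z - I * dd (Pi.single k I) F Z) (((dd_differentiable hF _).sub ((dd_differentiable hF _).const_mul I)) x)]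
  rw [dd_sub ((dd_differentiable hF _) x) (((dd_differentiable hF _).const_mul I) x)]
  rw [dd_const_mul ((dd_differentiable hF _) x)]

lemma dd_wDbar {F : (Fin M → ℂ) → ℂ} (hF : ContDiff ℝ 2 F) (k : Fin M) (v : Fin M → ℂ) (x : Fin M → ℂ) :
    dd v (wDbar k F) x = (dd v (dd (Pi.single k 1) F) x + Complex.I * dd v (dd (Pi.single k Complex.I) F) x) / 2 := by
  rw [wDbar_eq]
  rw [dd_div_two (g := fun Z => dd (Pi.single k 1) F Z + I * dd (Pi.single k I) F Z) (((dd_differentiable hF _).add ((dd_differentiable hF _).const_mul I)) x)]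
  rw [dd_add ((dd_differentiable hF _) x) (((dd_differentiable hF _).const_mul I) x)]
  rw [dd_const_mul ((dd_differentiable hF _) x)]

lemma wD_as_dd (k : Fin M) (F : (Fin M → ℂ) → ℂ) (x : Fin M → ℂ) :
    wD k F x = (dd (Pi.single k 1) F x - Complex.I * dd (Pi.single k Complex.I) F x) / 2 := rfl

lemma wDbar_as_dd (k : Fin M) (F : (Fin M → ℂ) → ℂ) (x : Fin M → ℂ) :
    wDbar k F x = (dd (Pi.single k 1) F x + Complex.I * dd (Pi.single k Complex.I) F x) / 2 := rfl

/-- Mixed Wirtinger derivatives commute for C² functions. -/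
lemma wirt_comm {F : (Fin M → ℂ) → ℂ} (hF : ContDiff ℝ 2 F) (j k : Fin M) (x : Fin M → ℂ) :
    wDbar k (wD j F) x = wD j (wDbar k F) x := by
  rw [wDbar_as_dd, wD_as_dd, dd_wD hF, dd_wD hF, dd_wDbar hF, dd_wDbar hF]
  rw [dd_comm hF (Pi.single k 1) (Pi.single j 1),
      dd_comm hF (Pi.single k 1) (Pi.single j Complex.I),
      dd_comm hF (Pi.single k Complex.I) (Pi.single j 1),
      dd_comm hF (Pi.single k Complex.I) (Pi.single j Complex.I)]
  ring

lemma clm_decomp (L : (Fin M → ℂ) →L[ℝ] ℂ) (w : Fin M → ℂ) :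
    L w = ∑ k : Fin M, ((w k).re • L (Pi.single k 1) + (w k).im • L (Pi.single k Complex.I)) := by
  have hw : w = ∑ k : Fin M, ((w k).re • (Pi.single k (1:ℂ) : Fin M → ℂ) + (w k).im • (Pi.single k Complex.I : Fin M → ℂ)) := by
    funext i
    simp only [Finset.sum_apply, Pi.add_apply, Pi.smul_apply]
    rw [Finset.sum_eq_single i]
    · simp only [Pi.single_eq_same, Complex.real_smul, smul_eq_mul]
      apply Complex.ext <;> simp
    · intro b _ hb
      simp [Pi.single_eq_of_ne' hb]
    · simp
  conv_lhs => rw [hw]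
  rw [map_sum]
  congr 1; funext k
  rw [map_add, map_smul, map_smul]

/-- pointwise algebra: Wirtinger decomposition of a real-linear functional -/
lemma wirtinger_point (P Q w : ℂ) :
    (P - Complex.I * Q) / 2 * w + (P + Complex.I * Q) / 2 * (starRingEnd ℂ w)
      = (w.re : ℂ) * P + (w.im : ℂ) * Q := by
  have hw : w = (w.re : ℂ) + (w.im : ℂ) * Complex.I := (Complex.re_add_im w).symm
  have hcw : (starRingEnd ℂ) w = (w.re : ℂ) - (w.im : ℂ) * Complex.I := by
    apply Complex.ext <;> simp
  rw [hcw]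
  nth_rewrite 1 [hw]
  have hI : Complex.I * Complex.I = -1 := Complex.I_mul_I
  linear_combination (-(Q * (w.im : ℂ))) * hI

/-- Chain rule in Wirtinger form. -/
lemma wirtinger_chain {n : ℕ} {z : Fin M → (Fin (n+1) → ℝ) → ℂ} {x : Fin (n+1) → ℝ}
    (hz : ∀ i, DifferentiableAt ℝ (z i) x)
    {F : (Fin M → ℂ) → ℂ} (hF : DifferentiableAt ℝ F (fun i => z i x))
    (v : Fin (n+1) → ℝ) :
    fderiv ℝ (fun y => F (fun i => z i y)) x v
      = ∑ k : Fin M, (wD k F (fun i => z i x) * fderiv ℝ (z k) x v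
          + wDbar k F (fun i => z i x) * starRingEnd ℂ (fderiv ℝ (z k) x v)) := by
  have hZ : DifferentiableAt ℝ (fun y (i : Fin M) => z i y) x :=
    differentiableAt_pi.2 hz
  have hcomp : fderiv ℝ (fun y => F (fun i => z i y)) x
      = (fderiv ℝ F (fun i => z i x)).comp (fderiv ℝ (fun y (i : Fin M) => z i y) x) :=
    fderiv_comp x hF hZ
  rw [hcomp]
  simp only [ContinuousLinearMap.comp_apply]
  rw [fderiv_pi hz]
  have hval : (ContinuousLinearMap.pi fun i => fderiv ℝ (z i) x) v
      = fun i => fderiv ℝ (z i) x v := rfl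
  rw [hval]
  rw [clm_decomp (fderiv ℝ F (fun i => z i x)) (fun i => fderiv ℝ (z i) x v)]
  congr 1; funext k
  rw [wD, wDbar]
  rw [wirtinger_point]
  simp [Complex.real_smul]

section Lam
variable {n : ℕ}

/-- The Minkowski contraction `g 0 - ∑ g l.succ`. -/
noncomputable def lam (g : Fin (n+1) → ℂ) : ℂ := g 0 - ∑ l : Fin n, g l.succ

lemma lam_add (g h : Fin (n+1) → ℂ) : lam (fun μ => g μ + h μ) = lam g + lam h := by
  simp only [lam, Finset.sum_add_distrib]; ring

lemma lam_sub (g h : Fin (n+1) → ℂ) : lam (fun μ => g μ - h μ) = lam g - lam h := by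
  simp only [lam, Finset.sum_sub_distrib]; ring

lemma lam_const_mul (c : ℂ) (g : Fin (n+1) → ℂ) : lam (fun μ => c * g μ) = c * lam g := by
  simp only [lam, ← Finset.mul_sum]; ring

lemma lam_conj (g : Fin (n+1) → ℂ) :
    lam (fun μ => starRingEnd ℂ (g μ)) = starRingEnd ℂ (lam g) := by
  simp only [lam, map_sub, map_sum]

lemma lam_sum {ι : Type*} (s : Finset ι) (g : ι → Fin (n+1) → ℂ) :
    lam (fun μ => ∑ j ∈ s, g j μ) = ∑ j ∈ s, lam (g j) := by
  simp only [lam, Finset.sum_sub_distrib]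
  rw [Finset.sum_comm]

end Lam

/-- The key algebraic cancellation. -/
lemma key_alg {n M : ℕ} (p r : Fin (n+1) → Fin M → ℂ)
    (a b : Fin M → ℂ) (caa cab cba cbb : Fin M → Fin M → ℂ)
    (hnull : ∀ i j, lam (fun μ => p μ i * p μ j) = 0)
    (hbox : ∀ j, lam (fun μ => r μ j) = 0)
    (hmix : ∀ j k, cab j k = cba k j) :
    lam (fun μ => ∑ j : Fin M,
      ((∑ k : Fin M, (caa j k * p μ k + cab j k * starRingEnd ℂ (p μ k))) * p μ j
       + a j * r μ j
       - ((∑ k : Fin M, (cba j k * p μ k + cbb j k * starRingEnd ℂ (p μ k))) * starRingEnd ℂ (p μ j)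
          + b j * starRingEnd ℂ (r μ j)))) = 0 := by
  classical
  set c := starRingEnd ℂ
  -- the mixed Minkowski product
  set G : Fin M → Fin M → ℂ := fun j k => lam (fun μ => c (p μ k) * p μ j) with hG
  have hnullc : ∀ i j, lam (fun μ => c (p μ i) * c (p μ j)) = 0 := by
    intro i j
    have : (fun μ => c (p μ i) * c (p μ j)) = fun μ => c (p μ i * p μ j) := by
      funext μ; simp [c, map_mul]
    rw [this, lam_conj, hnull, map_zero]
  rw [lam_sum]
  have hterm : ∀ j : Fin M,
      lam (fun μ =>
        (∑ k : Fin M, (caa j k * p μ k + cab j k * c (p μ k))) * p μ j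
        + a j * r μ j
        - ((∑ k : Fin M, (cba j k * p μ k + cbb j k * c (p μ k))) * c (p μ j)
           + b j * c (r μ j)))
      = (∑ k : Fin M, cab j k * G j k) - ∑ k : Fin M, cba j k * G k j := by
    intro j
    have e1 : ∀ μ, (∑ k : Fin M, (caa j k * p μ k + cab j k * c (p μ k))) * p μ j
        = ∑ k : Fin M, (caa j k * (p μ k * p μ j) + cab j k * (c (p μ k) * p μ j)) := by
      intro μ; rw [Finset.sum_mul]; congr 1; funext k; ring
    have e2 : ∀ μ, (∑ k : Fin M, (cba j k * p μ k + cbb j k * c (p μ k))) * c (p μ j)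
        = ∑ k : Fin M, (cba j k * (p μ k * c (p μ j)) + cbb j k * (c (p μ k) * c (p μ j))) := by
      intro μ; rw [Finset.sum_mul]; congr 1; funext k; ring
    simp only [e1, e2]
    rw [lam_sub, lam_add, lam_add, lam_sum, lam_sum, lam_const_mul, lam_const_mul]
    rw [hbox j, mul_zero]
    have hc0 : lam (fun μ => c (r μ j)) = 0 := by rw [lam_conj, hbox, map_zero]
    rw [hc0, mul_zero, add_zero, add_zero]
    have e3 : ∀ k : Fin M,
        lam (fun μ => caa j k * (p μ k * p μ j) + cab j k * (c (p μ k) * p μ j))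
        = cab j k * G j k := by
      intro k
      rw [lam_add, lam_const_mul, lam_const_mul, hnull k j, mul_zero, zero_add, hG]
    have e4 : ∀ k : Fin M,
        lam (fun μ => cba j k * (p μ k * c (p μ j)) + cbb j k * (c (p μ k) * c (p μ j)))
        = cba j k * G k j := by
      intro k
      rw [lam_add, lam_const_mul, lam_const_mul, hnullc k j, mul_zero, add_zero, hG]
      congr 1
      simp only []
      congr 1
      funext μ; ring
    rw [Finset.sum_congr rfl (fun k _ => e3 k), Finset.sum_congr rfl (fun k _ => e4 k)]
  rw [Finset.sum_congr rfl (fun j _ => hterm j)]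
  rw [Finset.sum_sub_distrib]
  have hswap : ∑ j : Fin M, ∑ k : Fin M, cba j k * G k j
      = ∑ j : Fin M, ∑ k : Fin M, cab j k * G j k := by
    rw [Finset.sum_comm]
    congr 1; funext k
    congr 1; funext j
    rw [hmix k j]
  rw [hswap, sub_self]

end WirtingerAux

lemma pd_eq_dd {n : ℕ} (μ : Fin (n+1)) (u : (Fin (n+1) → ℝ) → ℂ) :
    pd μ u = dd (Pi.single μ 1) u := rfl

theorem stmt3 {n M : ℕ} (z : Fin M → (Fin (n+1) → ℝ) → ℂ)
    (hz : ∀ i, ContDiff ℝ 2 (z i))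
    (hwave : ∀ i x, box2 (z i) x = 0)
    (hnull : ∀ i j x,
      pd 0 (z i) x * pd 0 (z j) x
        - ∑ l : Fin n, pd l.succ (z i) x * pd l.succ (z j) x = 0)
    (f : (Fin M → ℂ) → ℂ) (hf : ContDiff ℝ 2 f)
    (J : Fin (n+1) → (Fin (n+1) → ℝ) → ℂ)
    (hJ : J = fun μ x => ∑ j : Fin M,
      (wD j f (fun i => z i x) * pd μ (z j) x
        - wDbar j f (fun i => z i x) * pd μ (fun y => starRingEnd ℂ (z j y)) x)) :
    ∀ x, pd 0 (J 0) x - ∑ l : Fin n, pd l.succ (J l.succ) x = 0 := by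
  intro x
  subst hJ
  classical
  -- differentiability facts
  have hdz : ∀ i, Differentiable ℝ (z i) := fun i => (hz i).differentiable two_ne_zero
  have hpdz : ∀ (μ : Fin (n+1)) (i : Fin M), Differentiable ℝ (pd μ (z i)) := by
    intro μ i
    rw [pd_eq_dd]
    exact dd_differentiable (hz i) _
  have hZ : Differentiable ℝ (fun y (i : Fin M) => z i y) :=
    differentiable_pi.2 hdz
  have hA : ∀ j : Fin M, Differentiable ℝ (fun y => wD j f (fun i => z i y)) :=
    fun j => (wD_differentiable hf j).comp hZ
  have hB : ∀ j : Fin M, Differentiable ℝ (fun y => wDbar j f (fun i => z i y)) :=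
    fun j => (wDbar_differentiable hf j).comp hZ
  -- rewrite the conjugate derivative
  have hconj : ∀ (μ : Fin (n+1)) (j : Fin M) (y : Fin (n+1) → ℝ),
      pd μ (fun y' => starRingEnd ℂ (z j y')) y = starRingEnd ℂ (pd μ (z j) y) := by
    intro μ j y
    rw [pd_eq_dd]
    exact dd_conj (hdz j y) _
  have hJform : ∀ μ : Fin (n+1),
      (fun y => ∑ j : Fin M,
        (wD j f (fun i => z i y) * pd μ (z j) y
          - wDbar j f (fun i => z i y) * pd μ (fun y' => starRingEnd ℂ (z j y')) y))
      = fun y => ∑ j : Fin M,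
        (wD j f (fun i => z i y) * pd μ (z j) y
          - wDbar j f (fun i => z i y) * starRingEnd ℂ (pd μ (z j) y)) := by
    intro μ; funext y
    refine Finset.sum_congr rfl fun j _ => ?_
    rw [hconj μ j y]
  -- abbreviations
  set p : Fin (n+1) → Fin M → ℂ := fun μ k => pd μ (z k) x with hp
  set r : Fin (n+1) → Fin M → ℂ := fun μ j => pd μ (pd μ (z j)) x with hr
  set Zx : Fin M → ℂ := fun i => z i x with hZx
  -- master formula
  have master : ∀ μ : Fin (n+1),
      pd μ (fun y => ∑ j : Fin M,
        (wD j f (fun i => z i y) * pd μ (z j) y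
          - wDbar j f (fun i => z i y) * starRingEnd ℂ (pd μ (z j) y))) x
      = ∑ j : Fin M,
        ((∑ k : Fin M, (wD k (wD j f) Zx * p μ k
            + wDbar k (wD j f) Zx * starRingEnd ℂ (p μ k))) * p μ j
         + wD j f Zx * r μ j
         - ((∑ k : Fin M, (wD k (wDbar j f) Zx * p μ k
              + wDbar k (wDbar j f) Zx * starRingEnd ℂ (p μ k))) * starRingEnd ℂ (p μ j)
            + wDbar j f Zx * starRingEnd ℂ (r μ j))) := by
    intro μ
    rw [pd_eq_dd]
    rw [dd_sum (g := fun j y => wD j f (fun i => z i y) * pd μ (z j) y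
        - wDbar j f (fun i => z i y) * starRingEnd ℂ (pd μ (z j) y)) (fun j _ => (((hA j x).mul (hpdz μ j x)).sub
      ((hB j x).mul ((differentiable_conj_comp (hpdz μ j)) x))) )]
    refine Finset.sum_congr rfl fun j _ => ?_
    rw [dd_sub (g := fun y => wD j f (fun i => z i y) * pd μ (z j) y)
        (h := fun y => wDbar j f (fun i => z i y) * starRingEnd ℂ (pd μ (z j) y))
        ((hA j x).mul (hpdz μ j x))
        ((hB j x).mul ((differentiable_conj_comp (hpdz μ j)) x))]
    rw [dd_mul (hA j x) (hpdz μ j x)]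
    rw [dd_mul (hB j x) ((differentiable_conj_comp (hpdz μ j)) x)]
    rw [dd_conj (hpdz μ j x)]
    have hAder : dd (Pi.single μ 1) (fun y => wD j f (fun i => z i y)) x
        = ∑ k : Fin M, (wD k (wD j f) Zx * p μ k
            + wDbar k (wD j f) Zx * starRingEnd ℂ (p μ k)) := by
      exact wirtinger_chain (fun i => (hdz i).differentiableAt)
        ((wD_differentiable hf j) Zx) (Pi.single μ 1)
    have hBder : dd (Pi.single μ 1) (fun y => wDbar j f (fun i => z i y)) x
        = ∑ k : Fin M, (wD k (wDbar j f) Zx * p μ k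
            + wDbar k (wDbar j f) Zx * starRingEnd ℂ (p μ k)) := by
      exact wirtinger_chain (fun i => (hdz i).differentiableAt)
        ((wDbar_differentiable hf j) Zx) (Pi.single μ 1)
    rw [hAder, hBder]
    rfl
  -- conclude via the key algebraic lemma
  show lam (fun μ => pd μ (fun y => ∑ j : Fin M,
        (wD j f (fun i => z i y) * pd μ (z j) y
          - wDbar j f (fun i => z i y) * pd μ (fun y' => starRingEnd ℂ (z j y')) y)) x) = 0
  have hfun : (fun μ => pd μ (fun y => ∑ j : Fin M,
        (wD j f (fun i => z i y) * pd μ (z j) y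
          - wDbar j f (fun i => z i y) * pd μ (fun y' => starRingEnd ℂ (z j y')) y)) x)
      = fun μ => ∑ j : Fin M,
        ((∑ k : Fin M, (wD k (wD j f) Zx * p μ k
            + wDbar k (wD j f) Zx * starRingEnd ℂ (p μ k))) * p μ j
         + wD j f Zx * r μ j
         - ((∑ k : Fin M, (wD k (wDbar j f) Zx * p μ k
              + wDbar k (wDbar j f) Zx * starRingEnd ℂ (p μ k))) * starRingEnd ℂ (p μ j)
            + wDbar j f Zx * starRingEnd ℂ (r μ j))) := by
    funext μ
    rw [hJform μ]
    exact master μ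
  rw [hfun]
  exact key_alg p r (fun j => wD j f Zx) (fun j => wDbar j f Zx)
    (fun j k => wD k (wD j f) Zx) (fun j k => wDbar k (wD j f) Zx)
    (fun j k => wD k (wDbar j f) Zx) (fun j k => wDbar k (wDbar j f) Zx)
    (fun i j => hnull i j x) (fun j => hwave j x)
    (fun j k => wirt_comm hf j k Zx)
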